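/- Let M be an open subset of ℝⁿ, H : [0,T] × M × ℝⁿ → ℝ a C¹ Hamiltonian, C : M → ℝ a C¹ function, and p₁ := ∇C (so p₁(q) = dC(q)). For C¹ curves (q,p) with q(0) = q₀, define 𝒥[q,p] := C(q(T)) − S[q,p] where S[q,p] = ∫₀ᵀ(⟨p,q̇⟩ − H(t,q,p)) dt. Then 𝒥 is stationary under all partial variations (δq(0) = 0) if and only if the free boundary Type II d'Alembert principle δS[q,p] = ⟨dC(q(T)), δq(T)⟩ holds for all partial variations; equivalently, if and only if q̇ = D_p H, ṗ = −D_q H on (0,T) and p(T) = dC(q(T)). -/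

import Mathlib

open Set MeasureTheory intervalIntegral

/-- The classical Hamiltonian phase space action
`S[q,p] = ∫₀ᵀ (⟨p(t), q̇(t)⟩ − H(t,q(t),p(t))) dt`. -/
noncomputable def classicalAction (n : ℕ) (T : ℝ)
    (H : ℝ → (Fin n → ℝ) → (Fin n → ℝ) → ℝ) (q p : ℝ → (Fin n → ℝ)) : ℝ :=
  ∫ t in (0 : ℝ)..T, ((∑ i, p t i * deriv q t i) - H t (q t) (p t))

/-- The gradient of `C`, i.e. the section `p₁ = dC`. -/
noncomputable def gradOf (n : ℕ) (C : (Fin n → ℝ) → ℝ) : (Fin n → ℝ) → (Fin n → ℝ) :=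
  fun x i => fderiv ℝ C x (Pi.single i 1)



section Main

variable {n : ℕ} {T : ℝ} {H : ℝ → (Fin n → ℝ) → (Fin n → ℝ) → ℝ}
  {q p δq δp : ℝ → (Fin n → ℝ)}

/-- the full Hamiltonian as a function on phase space -/
def Hfull (n : ℕ) (H : ℝ → (Fin n → ℝ) → (Fin n → ℝ) → ℝ) :
    ℝ × (Fin n → ℝ) × (Fin n → ℝ) → ℝ := fun x => H x.1 x.2.1 x.2.2

noncomputable def Gfun (n : ℕ) (H : ℝ → (Fin n → ℝ) → (Fin n → ℝ) → ℝ)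
    (q p δq δp : ℝ → (Fin n → ℝ)) (ε t : ℝ) : ℝ :=
  (∑ i, (p t i + ε * δp t i) * (deriv q t i + ε * deriv δq t i))
    - Hfull n H (t, q t + ε • δq t, p t + ε • δp t)

noncomputable def Gder (n : ℕ) (H : ℝ → (Fin n → ℝ) → (Fin n → ℝ) → ℝ)
    (q p δq δp : ℝ → (Fin n → ℝ)) (ε t : ℝ) : ℝ :=
  (∑ i, (δp t i * (deriv q t i + ε * deriv δq t i) + (p t i + ε * δp t i) * deriv δq t i))
    - fderiv ℝ (Hfull n H) (t, q t + ε • δq t, p t + ε • δp t) (0, δq t, δp t)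

lemma hasDerivAt_pi_apply {f : ℝ → Fin n → ℝ} {f' : Fin n → ℝ} {t : ℝ}
    (h : HasDerivAt f f' t) (i : Fin n) : HasDerivAt (fun s => f s i) (f' i) t :=
  hasDerivAt_pi.1 h i

lemma deriv_var (hq : ContDiff ℝ 1 q) (hδq : ContDiff ℝ 1 δq) (ε t : ℝ) :
    deriv (fun s => q s + ε • δq s) t = deriv q t + ε • deriv δq t := by
  have h1 : HasDerivAt q (deriv q t) t := ((hq.differentiable one_ne_zero) t).hasDerivAt
  have h2 : HasDerivAt δq (deriv δq t) t := ((hδq.differentiable one_ne_zero) t).hasDerivAt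
  exact (h1.add (h2.const_smul ε)).deriv

lemma action_eq (hq : ContDiff ℝ 1 q) (hδq : ContDiff ℝ 1 δq) (ε : ℝ) :
    classicalAction n T H (fun t => q t + ε • δq t) (fun t => p t + ε • δp t)
      = ∫ t in (0:ℝ)..T, Gfun n H q p δq δp ε t := by
  unfold classicalAction Gfun Hfull
  congr 1
  funext t
  rw [deriv_var hq hδq]
  simp [smul_eq_mul]

lemma hasDerivAt_Gfun (hH : ContDiff ℝ 1 (Hfull n H))
    (hq : ContDiff ℝ 1 q) (hp : ContDiff ℝ 1 p)
    (hδq : ContDiff ℝ 1 δq) (hδp : ContDiff ℝ 1 δp) (ε t : ℝ) :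
    HasDerivAt (fun e => Gfun n H q p δq δp e t) (Gder n H q p δq δp ε t) ε := by
  have hsum : HasDerivAt
      (fun e : ℝ => ∑ i, (p t i + e * δp t i) * (deriv q t i + e * deriv δq t i))
      (∑ i, (δp t i * (deriv q t i + ε * deriv δq t i)
        + (p t i + ε * δp t i) * deriv δq t i)) ε := by
    refine HasDerivAt.fun_sum fun i _ => ?_
    simpa using (((hasDerivAt_id ε).mul_const (δp t i)).const_add (p t i)).fun_mul
      (((hasDerivAt_id ε).mul_const (deriv δq t i)).const_add (deriv q t i))
  have hγ : HasDerivAt (fun e : ℝ => ((t, q t + e • δq t, p t + e • δp t) :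
      ℝ × (Fin n → ℝ) × (Fin n → ℝ))) ((0 : ℝ), δq t, δp t) ε := by
    refine (hasDerivAt_const ε t).prodMk (HasDerivAt.prodMk ?_ ?_)
    · simpa using (((hasDerivAt_id ε).smul_const (δq t)).const_add (q t))
    · simpa using (((hasDerivAt_id ε).smul_const (δp t)).const_add (p t))
  have hHd : HasDerivAt (fun e : ℝ => Hfull n H (t, q t + e • δq t, p t + e • δp t))
      (fderiv ℝ (Hfull n H) (t, q t + ε • δq t, p t + ε • δp t) (0, δq t, δp t)) ε :=
    ((hH.differentiable one_ne_zero) _).hasFDerivAt.comp_hasDerivAt ε hγ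
  simpa [Gfun, Gder, smul_eq_mul, mul_comm] using hsum.fun_sub hHd

lemma continuous_Gder (hH : ContDiff ℝ 1 (Hfull n H))
    (hq : ContDiff ℝ 1 q) (hp : ContDiff ℝ 1 p)
    (hδq : ContDiff ℝ 1 δq) (hδp : ContDiff ℝ 1 δp) :
    Continuous (fun z : ℝ × ℝ => Gder n H q p δq δp z.1 z.2) := by
  have hdq : Continuous (deriv q) := hq.continuous_deriv le_rfl
  have hdδq : Continuous (deriv δq) := hδq.continuous_deriv le_rfl
  have hq' := hq.continuous
  have hp' := hp.continuous
  have hδq' := hδq.continuous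
  have hδp' := hδp.continuous
  have hin : Continuous (fun z : ℝ × ℝ =>
      ((z.2, q z.2 + z.1 • δq z.2, p z.2 + z.1 • δp z.2) :
        ℝ × (Fin n → ℝ) × (Fin n → ℝ))) := by fun_prop
  have hfd : Continuous (fun z : ℝ × ℝ =>
      fderiv ℝ (Hfull n H) (z.2, q z.2 + z.1 • δq z.2, p z.2 + z.1 • δp z.2)
        ((0 : ℝ), δq z.2, δp z.2)) := by
    exact ((hH.continuous_fderiv one_ne_zero).comp hin).clm_apply (by fun_prop)
  unfold Gder
  refine Continuous.sub ?_ hfd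
  refine continuous_finset_sum _ fun i _ => ?_
  have : Continuous (fun z : ℝ × ℝ => deriv q z.2 i) := by fun_prop
  fun_prop

lemma continuous_Gfun (hH : ContDiff ℝ 1 (Hfull n H))
    (hq : ContDiff ℝ 1 q) (hp : ContDiff ℝ 1 p)
    (hδq : ContDiff ℝ 1 δq) (hδp : ContDiff ℝ 1 δp) (ε : ℝ) :
    Continuous (Gfun n H q p δq δp ε) := by
  have hdq : Continuous (deriv q) := hq.continuous_deriv le_rfl
  have hdδq : Continuous (deriv δq) := hδq.continuous_deriv le_rfl
  have hq' := hq.continuous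
  have hp' := hp.continuous
  have hδq' := hδq.continuous
  have hδp' := hδp.continuous
  have hin : Continuous (fun t : ℝ =>
      ((t, q t + ε • δq t, p t + ε • δp t) : ℝ × (Fin n → ℝ) × (Fin n → ℝ))) := by fun_prop
  have hHc : Continuous (fun t : ℝ => Hfull n H (t, q t + ε • δq t, p t + ε • δp t)) :=
    hH.continuous.comp hin
  unfold Gfun
  refine Continuous.sub ?_ hHc
  refine continuous_finset_sum _ fun i _ => ?_
  fun_prop

/-- differentiation under the integral sign -/
lemma hasDerivAt_action (hT : 0 < T) (hH : ContDiff ℝ 1 (Hfull n H))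
    (hq : ContDiff ℝ 1 q) (hp : ContDiff ℝ 1 p)
    (hδq : ContDiff ℝ 1 δq) (hδp : ContDiff ℝ 1 δp) :
    HasDerivAt (fun ε : ℝ => classicalAction n T H
        (fun t => q t + ε • δq t) (fun t => p t + ε • δp t))
      (∫ t in (0:ℝ)..T, Gder n H q p δq δp 0 t) 0 := by
  have hrw : (fun ε : ℝ => classicalAction n T H
      (fun t => q t + ε • δq t) (fun t => p t + ε • δp t))
      = fun ε => ∫ t in (0:ℝ)..T, Gfun n H q p δq δp ε t :=
    funext fun ε => action_eq hq hδq ε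
  rw [hrw]
  have hK : IsCompact ((Icc (-1:ℝ) 1) ×ˢ (Icc (0:ℝ) T)) :=
    isCompact_Icc.prod isCompact_Icc
  obtain ⟨M, hM⟩ := hK.exists_bound_of_continuousOn
    ((continuous_Gder hH hq hp hδq hδp).continuousOn)
  have hmain := intervalIntegral.hasDerivAt_integral_of_dominated_loc_of_deriv_le
    (F := fun ε t => Gfun n H q p δq δp ε t) (F' := fun ε t => Gder n H q p δq δp ε t)
    (x₀ := (0:ℝ)) (a := 0) (b := T) (bound := fun _ => M) (μ := volume) (s := Metric.ball 0 1) (Metric.ball_mem_nhds 0 one_pos)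
    (Filter.Eventually.of_forall fun x =>
      (continuous_Gfun hH hq hp hδq hδp x).aestronglyMeasurable.restrict)
    ((continuous_Gfun hH hq hp hδq hδp 0).intervalIntegrable 0 T)
    (((continuous_Gder hH hq hp hδq hδp).comp
      (continuous_const.prodMk continuous_id)).aestronglyMeasurable.restrict)
    (MeasureTheory.ae_of_all _ fun t ht x hx => by
      refine hM (x, t) ?_
      refine ⟨?_, ?_⟩
      · have := Metric.mem_ball.1 hx
        rw [Real.dist_eq, sub_zero] at this
        exact ⟨by linarith [abs_le.1 this.le |>.1], by linarith [abs_le.1 this.le |>.2]⟩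
      · rw [uIoc_of_le hT.le] at ht
        exact Ioc_subset_Icc_self ht)
    (intervalIntegrable_const)
    (MeasureTheory.ae_of_all _ fun t ht x hx => hasDerivAt_Gfun hH hq hp hδq hδp x t)
  exact hmain.2


end Main


lemma fund_lemma' {T : ℝ} (hT : 0 < T) (g : ℝ → ℝ) (hg : Continuous g)
    (h : ∀ δ : ℝ → ℝ, ContDiff ℝ 1 δ → δ 0 = 0 → δ T = 0 →
      ∫ t in (0:ℝ)..T, g t * δ t = 0) :
    ∀ t ∈ Ioo (0:ℝ) T, g t = 0 := by
  intro t₀ ht₀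
  by_contra hne
  set c : ℝ := g t₀ with hc
  have hcpos : 0 < |c| := abs_pos.2 hne
  have hcont : ContinuousAt g t₀ := hg.continuousAt
  rw [Metric.continuousAt_iff] at hcont
  obtain ⟨r', hr', hball⟩ := hcont (|c|/2) (by positivity)
  set r : ℝ := min (r'/2) (min t₀ (T - t₀)) with hrdef
  have hrpos : 0 < r :=
    lt_min (by linarith) (lt_min ht₀.1 (by linarith [ht₀.2]))
  have hrt₀ : r ≤ t₀ := le_trans (min_le_right _ _) (min_le_left _ _)
  have hrT : r ≤ T - t₀ := le_trans (min_le_right _ _) (min_le_right _ _)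
  have hrr' : r < r' := lt_of_le_of_lt (min_le_left _ _) (by linarith)
  let B : ContDiffBump t₀ := ⟨r/2, r, by positivity, by linarith⟩
  have hδC : ContDiff ℝ 1 (fun t => c * B t) :=
    contDiff_const.mul (B.contDiff (n := 1))
  have hδ0 : c * B 0 = 0 := by
    have : dist (0:ℝ) t₀ = t₀ := by
      rw [Real.dist_eq, zero_sub, abs_neg, abs_of_pos ht₀.1]
    rw [B.zero_of_le_dist (by rw [this]; exact hrt₀), mul_zero]
  have hδT : c * B T = 0 := by
    have : dist T t₀ = T - t₀ := by
      rw [Real.dist_eq, abs_of_pos (by linarith [ht₀.2])]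
    rw [B.zero_of_le_dist (by rw [this]; exact hrT), mul_zero]
  have hzero := h (fun t => c * B t) hδC hδ0 hδT
  -- the integrand
  set f : ℝ → ℝ := fun t => g t * (c * B t) with hf
  have hfc : Continuous f := hg.mul (continuous_const.mul (B.contDiff (n := 1)).continuous)
  -- nonnegativity
  have hpos : ∀ t : ℝ, 0 ≤ f t := by
    intro t
    rcases le_or_gt r (dist t t₀) with hd | hd
    · simp [hf, B.zero_of_le_dist hd]
    · have h1 : |g t - c| < |c| / 2 := by
        have := hball (show dist t t₀ < r' from lt_trans hd hrr')
        simpa [Real.dist_eq] using this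
      have h2 : c ^ 2 / 2 ≤ c * g t := by
        nlinarith [neg_abs_le (c * (g t - c)), abs_mul c (g t - c), sq_abs c,
          abs_nonneg c, abs_nonneg (g t - c)]
      have : f t = (c * g t) * B t := by rw [hf]; ring
      rw [this]
      exact mul_nonneg (by nlinarith [sq_nonneg c, hcpos]) B.nonneg
  -- lower bound on inner interval
  set a : ℝ := t₀ - r/2 with ha
  set b : ℝ := t₀ + r/2 with hb
  have h0a : (0:ℝ) ≤ a := by simp [ha]; linarith
  have hab : a ≤ b := by simp [ha, hb]; linarith
  have hbT : b ≤ T := by simp [hb]; linarith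
  have hlow : ∀ t ∈ Icc a b, c ^ 2 / 2 ≤ f t := by
    intro t ht
    rw [mem_Icc, ha, hb] at ht
    have hdist : dist t t₀ ≤ r/2 := by
      rw [Real.dist_eq, abs_le]
      exact ⟨by linarith [ht.1], by linarith [ht.2]⟩
    have hB1 : B t = 1 := B.one_of_mem_closedBall (Metric.mem_closedBall.2 hdist)
    have h1 : |g t - c| < |c| / 2 := by
      have := hball (show dist t t₀ < r' by linarith)
      simpa [Real.dist_eq] using this
    have h2 : c ^ 2 / 2 ≤ c * g t := by
      nlinarith [neg_abs_le (c * (g t - c)), abs_mul c (g t - c), sq_abs c,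
        abs_nonneg c, abs_nonneg (g t - c)]
    have : f t = (c * g t) * B t := by rw [hf]; ring
    rw [this, hB1, mul_one]
    exact h2
  have hi1 : IntervalIntegrable f volume 0 a := hfc.intervalIntegrable _ _
  have hi2 : IntervalIntegrable f volume a b := hfc.intervalIntegrable _ _
  have hi3 : IntervalIntegrable f volume b T := hfc.intervalIntegrable _ _
  have hsplit : (∫ t in (0:ℝ)..a, f t) + (∫ t in a..b, f t) + (∫ t in b..T, f t)
      = ∫ t in (0:ℝ)..T, f t := by
    rw [intervalIntegral.integral_add_adjacent_intervals hi1 hi2,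
      intervalIntegral.integral_add_adjacent_intervals (hi1.trans hi2) hi3]
  have hn1 : 0 ≤ ∫ t in (0:ℝ)..a, f t :=
    intervalIntegral.integral_nonneg h0a (fun u _ => hpos u)
  have hn3 : 0 ≤ ∫ t in b..T, f t :=
    intervalIntegral.integral_nonneg hbT (fun u _ => hpos u)
  have hn2 : (b - a) * (c ^ 2 / 2) ≤ ∫ t in a..b, f t := by
    have := intervalIntegral.integral_mono_on hab
      (_root_.intervalIntegrable_const (c := c ^ 2 / 2)) hi2 hlow
    rwa [intervalIntegral.integral_const, smul_eq_mul] at this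
  have hba : b - a = r := by rw [ha, hb]; ring
  have : (0:ℝ) < (b - a) * (c ^ 2 / 2) := by
    rw [hba]
    have : 0 < c ^ 2 := by positivity
    positivity
  have hzero' : ∫ t in (0:ℝ)..T, f t = 0 := hzero
  linarith [hsplit, hn1, hn2, hn3, this, hzero'.symm ▸ hsplit]


section Main2x
variable {n : ℕ} {T : ℝ} {H : ℝ → (Fin n → ℝ) → (Fin n → ℝ) → ℝ}
  {q p δq δp : ℝ → (Fin n → ℝ)}

lemma clm_apply_eq_sum {n : ℕ} (Φ : (Fin n → ℝ) →L[ℝ] ℝ) (v : Fin n → ℝ) :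
    Φ v = ∑ i, v i * Φ (Pi.single i 1) := by
  have hv : v = ∑ i, v i • (Pi.single i 1 : Fin n → ℝ) := by
    funext j
    simp [Pi.single_apply]
  conv_lhs => rw [hv]
  rw [map_sum]
  simp [smul_eq_mul]

/-- partial derivative of H in q_i, as in the statement -/
noncomputable def Hq (n : ℕ) (H : ℝ → (Fin n → ℝ) → (Fin n → ℝ) → ℝ)
    (q p : ℝ → (Fin n → ℝ)) (t : ℝ) (i : Fin n) : ℝ :=
  fderiv ℝ (fun q' => H t q' (p t)) (q t) (Pi.single i 1)

noncomputable def Hp (n : ℕ) (H : ℝ → (Fin n → ℝ) → (Fin n → ℝ) → ℝ)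
    (q p : ℝ → (Fin n → ℝ)) (t : ℝ) (i : Fin n) : ℝ :=
  fderiv ℝ (fun p' => H t (q t) p') (p t) (Pi.single i 1)

lemma Hq_eq (hH : ContDiff ℝ 1 (Hfull n H)) (t : ℝ) (i : Fin n) :
    Hq n H q p t i = fderiv ℝ (Hfull n H) (t, q t, p t) (0, Pi.single i 1, 0) := by
  have hin : HasFDerivAt (fun q' : Fin n → ℝ => ((t, q', p t) : ℝ × (Fin n → ℝ) × (Fin n → ℝ)))
      (((0 : (Fin n → ℝ) →L[ℝ] ℝ)).prod
        ((ContinuousLinearMap.id ℝ (Fin n → ℝ)).prod (0 : (Fin n → ℝ) →L[ℝ] (Fin n → ℝ))))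
      (q t) := (hasFDerivAt_const t _).prodMk ((hasFDerivAt_id _).prodMk (hasFDerivAt_const _ _))
  have hcomp : HasFDerivAt (fun q' : Fin n → ℝ => H t q' (p t))
      ((fderiv ℝ (Hfull n H) (t, q t, p t)).comp _)
      (q t) := ((hH.differentiable one_ne_zero _).hasFDerivAt).comp (q t) hin
  rw [Hq, hcomp.fderiv]
  simp

lemma Hp_eq (hH : ContDiff ℝ 1 (Hfull n H)) (t : ℝ) (i : Fin n) :
    Hp n H q p t i = fderiv ℝ (Hfull n H) (t, q t, p t) (0, 0, Pi.single i 1) := by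
  have hin : HasFDerivAt (fun p' : Fin n → ℝ => ((t, q t, p') : ℝ × (Fin n → ℝ) × (Fin n → ℝ)))
      (((0 : (Fin n → ℝ) →L[ℝ] ℝ)).prod
        ((0 : (Fin n → ℝ) →L[ℝ] (Fin n → ℝ)).prod (ContinuousLinearMap.id ℝ (Fin n → ℝ))))
      (p t) := (hasFDerivAt_const t _).prodMk ((hasFDerivAt_const _ _).prodMk (hasFDerivAt_id _))
  have hcomp : HasFDerivAt (fun p' : Fin n → ℝ => H t (q t) p')
      ((fderiv ℝ (Hfull n H) (t, q t, p t)).comp _)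
      (p t) := ((hH.differentiable one_ne_zero _).hasFDerivAt).comp (p t) hin
  rw [Hp, hcomp.fderiv]
  simp

lemma DH_decomp (hH : ContDiff ℝ 1 (Hfull n H)) (t : ℝ) (v w : Fin n → ℝ) :
    fderiv ℝ (Hfull n H) (t, q t, p t) (0, v, w)
      = ∑ i, v i * Hq n H q p t i + ∑ i, w i * Hp n H q p t i := by
  have hvw : ((0 : ℝ), v, w) = (∑ i, v i • ((0:ℝ), (Pi.single i 1 : Fin n → ℝ), (0 : Fin n → ℝ)))
      + (∑ i, w i • ((0:ℝ), (0 : Fin n → ℝ), (Pi.single i 1 : Fin n → ℝ))) := by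
    refine Prod.ext ?_ (Prod.ext ?_ ?_)
    · simp [Prod.fst_sum]
    · simp only [Prod.fst_add, Prod.snd_add, Prod.fst_sum, Prod.snd_sum, Prod.smul_mk,
        smul_zero, smul_eq_mul]
      funext j
      simp [Pi.single_apply, Finset.sum_apply]
    · simp only [Prod.fst_add, Prod.snd_add, Prod.fst_sum, Prod.snd_sum, Prod.smul_mk,
        smul_zero, smul_eq_mul]
      funext j
      simp [Pi.single_apply, Finset.sum_apply]
  rw [hvw, map_add, map_sum, map_sum]
  simp only [_root_.map_smul, smul_eq_mul]
  congr 1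
  · exact Finset.sum_congr rfl fun i _ => by rw [Hq_eq hH]
  · exact Finset.sum_congr rfl fun i _ => by rw [Hp_eq hH]

/-- the "Euler–Lagrange" integrand -/
noncomputable def Kfun (n : ℕ) (H : ℝ → (Fin n → ℝ) → (Fin n → ℝ) → ℝ)
    (q p δq δp : ℝ → (Fin n → ℝ)) (t : ℝ) : ℝ :=
  ∑ i, ((deriv q t i - Hp n H q p t i) * δp t i
    - (deriv p t i + Hq n H q p t i) * δq t i)

lemma Gder_zero (hH : ContDiff ℝ 1 (Hfull n H)) (t : ℝ) :
    Gder n H q p δq δp 0 t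
      = (∑ i, (deriv p t i * δq t i + p t i * deriv δq t i))
        + Kfun n H q p δq δp t := by
  have h0q : q t + (0:ℝ) • δq t = q t := by simp
  have h0p : p t + (0:ℝ) • δp t = p t := by simp
  rw [Gder, h0q, h0p, DH_decomp hH, Kfun]
  rw [← Finset.sum_add_distrib, ← Finset.sum_add_distrib, ← Finset.sum_sub_distrib]
  refine Finset.sum_congr rfl fun i _ => ?_
  ring

lemma ibp (hp : ContDiff ℝ 1 p) (hδq : ContDiff ℝ 1 δq) (hδq0 : δq 0 = 0) :
    ∫ t in (0:ℝ)..T, (∑ i, (deriv p t i * δq t i + p t i * deriv δq t i))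
      = ∑ i, p T i * δq T i := by
  have hd : ∀ t : ℝ, HasDerivAt (fun s => ∑ i, p s i * δq s i)
      (∑ i, (deriv p t i * δq t i + p t i * deriv δq t i)) t := by
    intro t
    refine HasDerivAt.fun_sum fun i _ => ?_
    exact (hasDerivAt_pi_apply ((hp.differentiable one_ne_zero t).hasDerivAt) i).fun_mul
      (hasDerivAt_pi_apply ((hδq.differentiable one_ne_zero t).hasDerivAt) i)
  have hint : IntervalIntegrable
      (fun t => ∑ i, (deriv p t i * δq t i + p t i * deriv δq t i)) volume 0 T := by
    have hdp := hp.continuous_deriv le_rfl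
    have hdδq := hδq.continuous_deriv le_rfl
    have hpc := hp.continuous
    have hδqc := hδq.continuous
    refine Continuous.intervalIntegrable ?_ 0 T
    refine continuous_finset_sum _ fun i _ => ?_
    fun_prop
  have := intervalIntegral.integral_eq_sub_of_hasDerivAt (fun t _ => hd t) hint
  rw [this, hδq0]
  simp

lemma continuous_Kfun (hH : ContDiff ℝ 1 (Hfull n H))
    (hq : ContDiff ℝ 1 q) (hp : ContDiff ℝ 1 p)
    (hδq : ContDiff ℝ 1 δq) (hδp : ContDiff ℝ 1 δp) :
    Continuous (Kfun n H q p δq δp) := by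
  have hdq := hq.continuous_deriv le_rfl
  have hdp := hp.continuous_deriv le_rfl
  have hqc := hq.continuous
  have hpc := hp.continuous
  have hδqc := hδq.continuous
  have hδpc := hδp.continuous
  have hin : Continuous (fun t : ℝ => ((t, q t, p t) : ℝ × (Fin n → ℝ) × (Fin n → ℝ))) := by
    fun_prop
  have hHq : ∀ i, Continuous (fun t => Hq n H q p t i) := by
    intro i
    have : Continuous (fun t : ℝ =>
        fderiv ℝ (Hfull n H) (t, q t, p t) (0, Pi.single i 1, 0)) :=
      ((hH.continuous_fderiv one_ne_zero).comp hin).clm_apply continuous_const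
    exact this.congr fun t => (Hq_eq hH t i).symm
  have hHp : ∀ i, Continuous (fun t => Hp n H q p t i) := by
    intro i
    have : Continuous (fun t : ℝ =>
        fderiv ℝ (Hfull n H) (t, q t, p t) (0, 0, Pi.single i 1)) :=
      ((hH.continuous_fderiv one_ne_zero).comp hin).clm_apply continuous_const
    exact this.congr fun t => (Hp_eq hH t i).symm
  unfold Kfun
  refine continuous_finset_sum _ fun i _ => ?_
  exact ((((continuous_apply i).comp hdq).sub (hHp i)).mul ((continuous_apply i).comp hδpc)).sub
    ((((continuous_apply i).comp hdp).add (hHq i)).mul ((continuous_apply i).comp hδqc))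

lemma deltaS (hT : 0 < T) (hH : ContDiff ℝ 1 (Hfull n H))
    (hq : ContDiff ℝ 1 q) (hp : ContDiff ℝ 1 p)
    (hδq : ContDiff ℝ 1 δq) (hδp : ContDiff ℝ 1 δp) (hδq0 : δq 0 = 0) :
    HasDerivAt (fun ε : ℝ => classicalAction n T H
        (fun t => q t + ε • δq t) (fun t => p t + ε • δp t))
      (∑ i, p T i * δq T i + ∫ t in (0:ℝ)..T, Kfun n H q p δq δp t) 0 := by
  have h := hasDerivAt_action hT hH hq hp hδq hδp
  have hrw : ∫ t in (0:ℝ)..T, Gder n H q p δq δp 0 t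
      = ∑ i, p T i * δq T i + ∫ t in (0:ℝ)..T, Kfun n H q p δq δp t := by
    rw [intervalIntegral.integral_congr (g := fun t =>
        (∑ i, (deriv p t i * δq t i + p t i * deriv δq t i)) + Kfun n H q p δq δp t)
      (fun t _ => Gder_zero hH t)]
    rw [intervalIntegral.integral_add ?hi1 ?hi2]
    · rw [ibp hp hδq hδq0]
    case hi1 =>
      have hdp := hp.continuous_deriv le_rfl
      have hdδq := hδq.continuous_deriv le_rfl
      have hpc := hp.continuous
      have hδqc := hδq.continuous
      refine Continuous.intervalIntegrable ?_ 0 T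
      refine continuous_finset_sum _ fun i _ => ?_
      fun_prop
    case hi2 => exact (continuous_Kfun hH hq hp hδq hδp).intervalIntegrable 0 T
  rwa [hrw] at h

lemma hasDerivAt_Cpart {C : (Fin n → ℝ) → ℝ} (hC : ContDiff ℝ 1 C) :
    HasDerivAt (fun ε : ℝ => C (q T + ε • δq T))
      (∑ i, gradOf n C (q T) i * δq T i) 0 := by
  have hline : HasDerivAt (fun ε : ℝ => q T + ε • δq T) (δq T) 0 := by
    simpa using ((hasDerivAt_id (0:ℝ)).smul_const (δq T)).const_add (q T)
  have h := ((hC.differentiable one_ne_zero _).hasFDerivAt).comp_hasDerivAt 0 hline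
  simp only [zero_smul, add_zero] at h
  have : fderiv ℝ C (q T) (δq T) = ∑ i, gradOf n C (q T) i * δq T i := by
    rw [clm_apply_eq_sum]
    exact Finset.sum_congr rfl fun i _ => by rw [gradOf, mul_comm]
  rwa [this] at h

end Main2x


section Main3
variable {n : ℕ} {T : ℝ} {H : ℝ → (Fin n → ℝ) → (Fin n → ℝ) → ℝ}
  {q p δq δp : ℝ → (Fin n → ℝ)}

/-- K-integral vanishes when Hamilton's equations hold on the open interval -/
lemma intK_zero (hT : 0 < T)
    (hHam : ∀ t ∈ Ioo (0:ℝ) T,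
      (deriv q t = fun i => Hp n H q p t i) ∧ (deriv p t = fun i => -(Hq n H q p t i))) :
    ∫ t in (0:ℝ)..T, Kfun n H q p δq δp t = 0 := by
  have hae : ∀ᵐ t : ℝ, t ≠ T := by
    rw [MeasureTheory.ae_iff]
    have : {t : ℝ | ¬ t ≠ T} = {T} := by ext x; simp
    rw [this]
    exact Real.volume_singleton
  have : ∫ t in (0:ℝ)..T, Kfun n H q p δq δp t = ∫ t in (0:ℝ)..T, (0:ℝ) := by
    refine intervalIntegral.integral_congr_ae ?_
    filter_upwards [hae] with t htne htmem
    rw [uIoc_of_le hT.le] at htmem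
    have htIoo : t ∈ Ioo (0:ℝ) T := ⟨htmem.1, lt_of_le_of_ne htmem.2 htne⟩
    obtain ⟨h1, h2⟩ := hHam t htIoo
    rw [Kfun]
    refine Finset.sum_eq_zero fun i _ => ?_
    rw [show deriv q t i = Hp n H q p t i from congrFun h1 i,
      show deriv p t i = -(Hq n H q p t i) from congrFun h2 i]
    ring
  rw [this, intervalIntegral.integral_zero]

theorem final
    (n : ℕ) (T : ℝ) (hT : 0 < T)
    (H : ℝ → (Fin n → ℝ) → (Fin n → ℝ) → ℝ)
    (hH : ContDiff ℝ 1 (fun x : ℝ × (Fin n → ℝ) × (Fin n → ℝ) => H x.1 x.2.1 x.2.2))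
    (C : (Fin n → ℝ) → ℝ) (hC : ContDiff ℝ 1 C)
    (q p : ℝ → (Fin n → ℝ)) (hq : ContDiff ℝ 1 q) (hp : ContDiff ℝ 1 p)
    (q₀ : Fin n → ℝ) (hq0 : q 0 = q₀) :
    ((∀ δq δp : ℝ → (Fin n → ℝ), ContDiff ℝ 1 δq → ContDiff ℝ 1 δp → δq 0 = 0 →
        deriv (fun ε : ℝ => C (q T + ε • δq T)
            - classicalAction n T H (fun t => q t + ε • δq t) (fun t => p t + ε • δp t)) 0
          = 0)
      ↔ (∀ δq δp : ℝ → (Fin n → ℝ), ContDiff ℝ 1 δq → ContDiff ℝ 1 δp → δq 0 = 0 →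
        deriv (fun ε : ℝ =>
            classicalAction n T H (fun t => q t + ε • δq t) (fun t => p t + ε • δp t)) 0
          = ∑ i, gradOf n C (q T) i * δq T i)) ∧
    ((∀ δq δp : ℝ → (Fin n → ℝ), ContDiff ℝ 1 δq → ContDiff ℝ 1 δp → δq 0 = 0 →
        deriv (fun ε : ℝ => C (q T + ε • δq T)
            - classicalAction n T H (fun t => q t + ε • δq t) (fun t => p t + ε • δp t)) 0
          = 0)
      ↔ ((∀ t ∈ Ioo (0 : ℝ) T,
            deriv q t = (fun i => fderiv ℝ (fun p' => H t (q t) p') (p t) (Pi.single i 1)) ∧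
            deriv p t = (fun i => -fderiv ℝ (fun q' => H t q' (p t)) (q t) (Pi.single i 1)))
          ∧ p T = gradOf n C (q T))) := by
  have hHf : ContDiff ℝ 1 (Hfull n H) := hH
  -- the key derivative computation for each variation
  have key : ∀ δq δp : ℝ → (Fin n → ℝ), ContDiff ℝ 1 δq → ContDiff ℝ 1 δp → δq 0 = 0 →
      deriv (fun ε : ℝ => C (q T + ε • δq T)
          - classicalAction n T H (fun t => q t + ε • δq t) (fun t => p t + ε • δp t)) 0
        = (∑ i, gradOf n C (q T) i * δq T i)
          - (∑ i, p T i * δq T i + ∫ t in (0:ℝ)..T, Kfun n H q p δq δp t) := by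
    intro δq δp hδq hδp hδq0
    exact ((hasDerivAt_Cpart hC).sub (deltaS hT hHf hq hp hδq hδp hδq0)).deriv
  have keyS : ∀ δq δp : ℝ → (Fin n → ℝ), ContDiff ℝ 1 δq → ContDiff ℝ 1 δp → δq 0 = 0 →
      deriv (fun ε : ℝ =>
          classicalAction n T H (fun t => q t + ε • δq t) (fun t => p t + ε • δp t)) 0
        = ∑ i, p T i * δq T i + ∫ t in (0:ℝ)..T, Kfun n H q p δq δp t := by
    intro δq δp hδq hδp hδq0
    exact (deltaS hT hHf hq hp hδq hδp hδq0).deriv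
  constructor
  · constructor
    · intro h δq δp hδq hδp hδq0
      have h1 := h δq δp hδq hδp hδq0
      rw [key δq δp hδq hδp hδq0] at h1
      rw [keyS δq δp hδq hδp hδq0]
      linarith
    · intro h δq δp hδq hδp hδq0
      have h1 := h δq δp hδq hδp hδq0
      rw [keyS δq δp hδq hδp hδq0] at h1
      rw [key δq δp hδq hδp hδq0]
      linarith
  -- continuity facts
  have hdq : Continuous (deriv q) := hq.continuous_deriv le_rfl
  have hdp : Continuous (deriv p) := hp.continuous_deriv le_rfl
  have hin : Continuous (fun t : ℝ => ((t, q t, p t) : ℝ × (Fin n → ℝ) × (Fin n → ℝ))) := by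
    have := hq.continuous; have := hp.continuous; fun_prop
  have hHqc : ∀ i, Continuous (fun t => Hq n H q p t i) := by
    intro i
    have : Continuous (fun t : ℝ =>
        fderiv ℝ (Hfull n H) (t, q t, p t) (0, Pi.single i 1, 0)) :=
      ((hHf.continuous_fderiv one_ne_zero).comp hin).clm_apply continuous_const
    exact this.congr fun t => (Hq_eq hHf t i).symm
  have hHpc : ∀ i, Continuous (fun t => Hp n H q p t i) := by
    intro i
    have : Continuous (fun t : ℝ =>
        fderiv ℝ (Hfull n H) (t, q t, p t) (0, 0, Pi.single i 1)) :=
      ((hHf.continuous_fderiv one_ne_zero).comp hin).clm_apply continuous_const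
    exact this.congr fun t => (Hp_eq hHf t i).symm
  constructor
  · -- forward: stationarity implies Hamilton + boundary
    intro hstat
    -- step A: q̇ = H_p on Ioo
    have hA : ∀ (i : Fin n), ∀ t ∈ Ioo (0:ℝ) T, deriv q t i = Hp n H q p t i := by
      intro i
      have hmain := fund_lemma' hT (fun t => deriv q t i - Hp n H q p t i)
        (((continuous_apply i).comp hdq).sub (hHpc i)) ?tests
      case tests =>
        intro δ hδ hδ0 hδT
        set δp : ℝ → (Fin n → ℝ) := fun t => δ t • (Pi.single i 1 : Fin n → ℝ) with hδpdef
        have hδpC : ContDiff ℝ 1 δp := hδ.smul contDiff_const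
        have hKt : ∀ t, Kfun n H q p (fun _ => (0 : Fin n → ℝ)) δp t
            = (deriv q t i - Hp n H q p t i) * δ t := by
          intro t
          rw [Kfun]
          simp [hδpdef, Pi.single_apply, mul_ite, Finset.sum_ite_eq']
        have hst := hstat (fun _ => (0 : Fin n → ℝ)) δp contDiff_const hδpC rfl
        rw [key _ _ contDiff_const hδpC rfl] at hst
        simp only [Pi.zero_apply, mul_zero, Finset.sum_const_zero, zero_sub, zero_add,
          neg_eq_zero] at hst
        rw [intervalIntegral.integral_congr
          (g := fun t => Kfun n H q p (fun _ => (0 : Fin n → ℝ)) δp t)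
          (fun t _ => (hKt t).symm)]
        exact hst
      intro t ht
      have h := hmain t ht
      linarith
    -- step B: ṗ = −H_q on Ioo
    have hB : ∀ (i : Fin n), ∀ t ∈ Ioo (0:ℝ) T, deriv p t i = -(Hq n H q p t i) := by
      intro i
      have hmain := fund_lemma' hT (fun t => deriv p t i + Hq n H q p t i)
        (((continuous_apply i).comp hdp).add (hHqc i)) ?tests
      case tests =>
        intro δ hδ hδ0 hδT
        set δq : ℝ → (Fin n → ℝ) := fun t => δ t • (Pi.single i 1 : Fin n → ℝ) with hδqdef
        have hδqC : ContDiff ℝ 1 δq := hδ.smul contDiff_const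
        have hδq0 : δq 0 = 0 := by rw [hδqdef]; simp [hδ0]
        have hKt : ∀ t, Kfun n H q p δq (fun _ => (0 : Fin n → ℝ)) t
            = -((deriv p t i + Hq n H q p t i) * δ t) := by
          intro t
          rw [Kfun]
          simp [hδqdef, Pi.single_apply, mul_ite, Finset.sum_ite_eq']

        have hst := hstat δq (fun _ => (0 : Fin n → ℝ)) hδqC contDiff_const hδq0
        rw [key _ _ hδqC contDiff_const hδq0] at hst
        have hδqT : δq T = 0 := by rw [hδqdef]; simp [hδT]
        rw [hδqT] at hst
        simp only [Pi.zero_apply, mul_zero, Finset.sum_const_zero, zero_sub, zero_add,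
          neg_eq_zero] at hst
        have : ∫ t in (0:ℝ)..T, (deriv p t i + Hq n H q p t i) * δ t
            = - ∫ t in (0:ℝ)..T, Kfun n H q p δq (fun _ => (0 : Fin n → ℝ)) t := by
          rw [← intervalIntegral.integral_neg]
          exact intervalIntegral.integral_congr fun t _ => by rw [hKt t]; ring
        rw [this, hst, neg_zero]
      intro t ht
      have h := hmain t ht
      linarith
    have hHam : ∀ t ∈ Ioo (0:ℝ) T,
        (deriv q t = fun i => Hp n H q p t i) ∧ (deriv p t = fun i => -(Hq n H q p t i)) :=
      fun t ht => ⟨funext fun i => hA i t ht, funext fun i => hB i t ht⟩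
    refine ⟨hHam, ?_⟩
    -- boundary condition
    funext i
    set δq : ℝ → (Fin n → ℝ) := fun t => (t/T) • (Pi.single i 1 : Fin n → ℝ) with hδqdef
    have hδqC : ContDiff ℝ 1 δq := (contDiff_id.div_const T).smul contDiff_const
    have hδq0 : δq 0 = 0 := by rw [hδqdef]; simp
    have hst := hstat δq (fun _ => (0 : Fin n → ℝ)) hδqC contDiff_const hδq0
    rw [key _ _ hδqC contDiff_const hδq0, intK_zero hT hHam] at hst
    have hδqT : δq T = (Pi.single i 1 : Fin n → ℝ) := by
      rw [hδqdef]; simp [div_self hT.ne']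
    rw [hδqT] at hst
    simp only [Pi.single_apply, mul_ite, mul_one, mul_zero, Finset.sum_ite_eq',
      Finset.mem_univ, if_true, add_zero] at hst
    linarith
  · -- backward
    rintro ⟨hHam, hpT⟩ δq δp hδq hδp hδq0
    rw [key δq δp hδq hδp hδq0, intK_zero hT hHam, hpT]
    ring
end Main3

/-- With `p₁ = dC` exact, stationarity of `𝒥[q,p] = C(q(T)) − S[q,p]`
under all partial variations (`δq(0) = 0`) is equivalent to the free boundary Type II
d'Alembert principle `δS[q,p] = ⟨dC(q(T)), δq(T)⟩`, and also equivalent to Hamilton's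
equations on `(0,T)` together with the free boundary condition `p(T) = dC(q(T))`. -/
theorem free_boundary_typeII_dAlembert_stationarity
    (n : ℕ) (T : ℝ) (hT : 0 < T)
    (H : ℝ → (Fin n → ℝ) → (Fin n → ℝ) → ℝ)
    (hH : ContDiff ℝ 1 (fun x : ℝ × (Fin n → ℝ) × (Fin n → ℝ) => H x.1 x.2.1 x.2.2))
    (C : (Fin n → ℝ) → ℝ) (hC : ContDiff ℝ 1 C)
    (q p : ℝ → (Fin n → ℝ)) (hq : ContDiff ℝ 1 q) (hp : ContDiff ℝ 1 p)
    (q₀ : Fin n → ℝ) (hq0 : q 0 = q₀) :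
    ((∀ δq δp : ℝ → (Fin n → ℝ), ContDiff ℝ 1 δq → ContDiff ℝ 1 δp → δq 0 = 0 →
        deriv (fun ε : ℝ => C (q T + ε • δq T)
            - classicalAction n T H (fun t => q t + ε • δq t) (fun t => p t + ε • δp t)) 0
          = 0)
      ↔ (∀ δq δp : ℝ → (Fin n → ℝ), ContDiff ℝ 1 δq → ContDiff ℝ 1 δp → δq 0 = 0 →
        deriv (fun ε : ℝ =>
            classicalAction n T H (fun t => q t + ε • δq t) (fun t => p t + ε • δp t)) 0
          = ∑ i, gradOf n C (q T) i * δq T i)) ∧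
    ((∀ δq δp : ℝ → (Fin n → ℝ), ContDiff ℝ 1 δq → ContDiff ℝ 1 δp → δq 0 = 0 →
        deriv (fun ε : ℝ => C (q T + ε • δq T)
            - classicalAction n T H (fun t => q t + ε • δq t) (fun t => p t + ε • δp t)) 0
          = 0)
      ↔ ((∀ t ∈ Ioo (0 : ℝ) T,
            deriv q t = (fun i => fderiv ℝ (fun p' => H t (q t) p') (p t) (Pi.single i 1)) ∧
            deriv p t = (fun i => -fderiv ℝ (fun q' => H t q' (p t)) (q t) (Pi.single i 1)))
          ∧ p T = gradOf n C (q T))) :=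
  final n T hT H hH C hC q p hq hp q₀ hq0
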